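/- Let d ≥ 3 and let z_1, …, z_d ∈ ℤ^d be a basis of ℤ^d such that z̲_1, …, z̲_{d−1} are linearly independent and z̲_2, …, z̲_d are linearly independent in ℝ^{d−1}. Suppose |z̲_3| ≥ |z̲_1| and det Λ̲_{2,d−1} > 3 |z̲_2| · det Λ̲_{2,d−2} (where for d = 3 one reads det Λ̲_{2,1} = |z̲_2|). Then 𝔖_2 is contained in the interior of 𝔖_1, i.e. |x − α_1| < R_1 for every x ∈ π_d with |x − α_2| ≤ R_2, and moreover R_2 < R_1/3. -/

import Mathlib

open scoped InnerProductSpace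
open Submodule Set Matrix

noncomputable section

/-- `ℝ^n` with the Euclidean structure. -/
abbrev E (n : ℕ) : Type := EuclideanSpace ℝ (Fin n)

/-- The projection `x ↦ x̲` forgetting the last coordinate. -/
def pr (d : ℕ) (x : E d) : E (d - 1) :=
  WithLp.toLp 2 (fun i : Fin (d - 1) => x (Fin.castLE (Nat.sub_le d 1) i))

/-- The canonical embedding of `ℤ^d` into `ℝ^d`. -/
def toE (d : ℕ) (z : Fin d → ℤ) : E d := WithLp.toLp 2 (fun i => (z i : ℝ))

/-- The `m`-dimensional volume of the parallelepiped spanned by `v 0, …, v (m-1)`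
(square root of the Gram determinant). -/
def gramVol {n m : ℕ} (v : Fin m → E n) : ℝ :=
  Real.sqrt ((Matrix.of (fun i j : Fin m => ⟪v i, v j⟫_ℝ)).det)

/-- `z` is a best approximation vector for the linear form `L_α : x ↦ ⟪α, x⟫`. -/
def IsBestApprox (d : ℕ) (α : E d) (z : Fin d → ℤ) : Prop :=
  pr d (toE d z) ≠ 0 ∧
  ∀ z' : Fin d → ℤ, pr d (toE d z') ≠ 0 →
    (‖pr d (toE d z')‖ ≤ ‖pr d (toE d z)‖ → |⟪α, toE d z⟫_ℝ| ≤ |⟪α, toE d z'⟫_ℝ|) ∧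
    (‖pr d (toE d z')‖ < ‖pr d (toE d z)‖ → |⟪α, toE d z⟫_ℝ| < |⟪α, toE d z'⟫_ℝ|)

/-- `det Λ̲_{k,l}` for a sequence of integer vectors: the `l`-dimensional volume of the
parallelepiped spanned by `z̲_k, …, z̲_{k+l-1}`. -/
def detL (d : ℕ) (z : ℕ → Fin d → ℤ) (k l : ℕ) : ℝ :=
  gramVol (fun i : Fin l => pr d (toE d (z (k + i.1))))

/-- `D_{k,l} = det Λ̲_{k,l} / |z̲_k|^l`. -/
def Dq (d : ℕ) (z : ℕ → Fin d → ℤ) (k l : ℕ) : ℝ :=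
  detL d z k l / ‖pr d (toE d (z k))‖ ^ l

/-- `B_k = |z̲_{k+1}| / |z̲_k|`. -/
def Bq (d : ℕ) (z : ℕ → Fin d → ℤ) (k : ℕ) : ℝ :=
  ‖pr d (toE d (z (k + 1)))‖ / ‖pr d (toE d (z k))‖

/-- `R_k = 1 / (2 |z̲_{k+1}| det Λ̲_{k,d-1})`. -/
def Rq (d : ℕ) (z : ℕ → Fin d → ℤ) (k : ℕ) : ℝ :=
  1 / (2 * ‖pr d (toE d (z (k + 1)))‖ * detL d z k (d - 1))

/-- `v 0, …, v (d-1)` form a basis of the lattice `ℤ^d`. -/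
def IsZBasis (d : ℕ) (v : Fin d → Fin d → ℤ) : Prop :=
  IsUnit ((Matrix.of (fun i j : Fin d => v j i)).det)



variable {F : Type*} [NormedAddCommGroup F] [InnerProductSpace ℝ F]

def gramDet {m : ℕ} (v : Fin m → F) : ℝ := (Matrix.of fun i j => ⟪v i, v j⟫_ℝ).det

lemma inner_eq_zero_of_span {m : ℕ} {w : Fin m → F} {b p : F}
    (hb : ∀ i, ⟪b, w i⟫_ℝ = 0) (hp : p ∈ span ℝ (range w)) : ⟪b, p⟫_ℝ = 0 := by
  obtain ⟨c, rfl⟩ := (mem_span_range_iff_exists_fun ℝ).mp hp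
  simp [inner_sum, real_inner_smul_right, hb]

lemma gramDet_eq_zero {m : ℕ} {v : Fin m → F} (h : ¬ LinearIndependent ℝ v) :
    gramDet v = 0 := by
  obtain ⟨g, hg, i, hi⟩ := Fintype.not_linearIndependent_iff.mp h
  rw [gramDet, ← Matrix.exists_mulVec_eq_zero_iff]
  refine ⟨g, fun hgz => hi (congrFun hgz i), ?_⟩
  funext j
  simp only [Matrix.mulVec, dotProduct, Matrix.of_apply]
  have : ∑ k, ⟪v j, v k⟫_ℝ * g k = ⟪v j, ∑ k, g k • v k⟫_ℝ := by
    rw [inner_sum]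
    simp [real_inner_smul_right, mul_comm]
  simpa [hg] using this

lemma gramDet_cons {m : ℕ} (w : Fin m → F) (b p : F)
    (hb : ∀ i, ⟪b, w i⟫_ℝ = 0) (hp : p ∈ span ℝ (range w)) :
    gramDet (Fin.cons (b + p) w) = ‖b‖ ^ 2 * gramDet w := by
  have hbp : ⟪b, p⟫_ℝ = 0 := inner_eq_zero_of_span hb hp
  set u' : Fin (m + 1) → F := Fin.cons (b + p) w with hu'
  set v' : Fin (m + 1) → F := Fin.cons p w with hv'
  set N : Matrix (Fin (m + 1)) (Fin (m + 1)) ℝ :=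
    Matrix.of fun i j => ⟪v' i, v' j⟫_ℝ with hN
  have hdep : gramDet v' = 0 := by
    apply gramDet_eq_zero
    rw [hv', linearIndependent_fin_cons]
    tauto
  have hdepN : N.det = 0 := hdep
  set e0 : Fin (m + 1) → ℝ := Pi.single 0 1 with he0
  have hM : Matrix.of (fun i j => ⟪u' i, u' j⟫_ℝ)
      = N.updateRow 0 (N 0 + ‖b‖ ^ 2 • e0) := by
    funext i j
    rcases i.eq_zero_or_eq_succ with rfl | ⟨i', rfl⟩
    · rcases j.eq_zero_or_eq_succ with rfl | ⟨j', rfl⟩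
      · simp only [Matrix.of_apply, Matrix.updateRow_self, Pi.add_apply, Pi.smul_apply,
          hu', hv', he0, Fin.cons_zero, hN, Pi.single_eq_same, smul_eq_mul, mul_one]
        rw [real_inner_add_add_self, hbp, real_inner_self_eq_norm_sq, real_inner_self_eq_norm_sq]
        ring
      · simp only [Matrix.of_apply, Matrix.updateRow_self, Pi.add_apply, Pi.smul_apply,
          hu', hv', he0, Fin.cons_zero, Fin.cons_succ, hN,
          Pi.single_eq_of_ne (Fin.succ_ne_zero j'), smul_eq_mul, mul_zero, add_zero]
        rw [inner_add_left, hb, zero_add]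
    · have hne := Fin.succ_ne_zero i'
      rcases j.eq_zero_or_eq_succ with rfl | ⟨j', rfl⟩
      · simp only [Matrix.of_apply, Matrix.updateRow_ne hne, hu', hv', hN,
          Fin.cons_zero, Fin.cons_succ]
        have hbi : ⟪w i', b⟫_ℝ = 0 := by rw [real_inner_comm]; exact hb i'
        rw [inner_add_right, hbi, zero_add]
      · simp only [Matrix.of_apply, Matrix.updateRow_ne hne, hu', hv', hN, Fin.cons_succ]
  rw [gramDet, hM, Matrix.det_updateRow_add, Matrix.updateRow_eq_self, hdepN,
    Matrix.det_updateRow_smul, zero_add]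
  congr 1
  -- det (N.updateRow 0 e0) = gramDet w
  rw [Matrix.det_succ_row_zero, Fin.sum_univ_succ]
  have h00 : (N.updateRow 0 e0) 0 0 = 1 := by simp [he0]
  have hrest : ∀ j : Fin m, (N.updateRow 0 e0) 0 j.succ = 0 := by
    intro j; simp [he0, Pi.single_eq_of_ne (Fin.succ_ne_zero j)]
  rw [Finset.sum_eq_zero (fun j _ => by rw [hrest]; ring)]
  rw [h00]
  have hsub : (N.updateRow 0 e0).submatrix Fin.succ (Fin.succAbove 0)
      = Matrix.of fun i j : Fin m => ⟪w i, w j⟫_ℝ := by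
    funext i j
    simp [hN, hv', Matrix.updateRow_ne (Fin.succ_ne_zero i), Fin.succAbove, Fin.cons_succ]
  rw [hsub]
  simp [gramDet]

lemma gramDet_reindex {m m' : ℕ} (e : Fin m' ≃ Fin m) (v : Fin m → F) :
    gramDet (v ∘ e) = gramDet v := by
  rw [gramDet, gramDet, ← Matrix.det_submatrix_equiv_self e]
  rfl

lemma exists_orth_decomp [FiniteDimensional ℝ F] {m : ℕ} (w : Fin m → F) (x : F) :
    ∃ b p : F, x = b + p ∧ b ∈ (span ℝ (range w))ᗮ ∧ (∀ i, ⟪b, w i⟫_ℝ = 0) ∧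
      p ∈ span ℝ (range w) ∧ ‖b‖ ≤ ‖x‖ := by
  set K := span ℝ (range w) with hK
  set p : F := (orthogonalProjection K x : F) with hp
  set b : F := x - p with hb
  have hbK : b ∈ Kᗮ := K.sub_starProjection_mem_orthogonal x
  have hbw : ∀ i, ⟪b, w i⟫_ℝ = 0 := by
    intro i
    have : w i ∈ K := subset_span (mem_range_self i)
    have := (Submodule.mem_orthogonal K b).mp hbK (w i) this
    rwa [real_inner_comm] at this
  have hpK : p ∈ K := coe_mem _
  refine ⟨b, p, by rw [hb, sub_add_cancel], hbK, hbw, hpK, ?_⟩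
  have hbp : ⟪b, p⟫_ℝ = 0 := by
    rw [real_inner_comm]; exact (Submodule.mem_orthogonal K b).mp hbK p hpK
  have hx2 : ‖x‖ ^ 2 = ‖b‖ ^ 2 + ‖p‖ ^ 2 := by
    have : x = b + p := by rw [hb, sub_add_cancel]
    rw [this, norm_add_sq_real, hbp]
    ring
  nlinarith [norm_nonneg b, norm_nonneg p, norm_nonneg x]

lemma gramDet_nonneg [FiniteDimensional ℝ F] : ∀ {m : ℕ} (v : Fin m → F), 0 ≤ gramDet v := by
  intro m
  induction m with
  | zero => intro v; simp [gramDet, Matrix.det_fin_zero]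
  | succ m ih =>
    intro v
    obtain ⟨b, p, hx, _, hb, hp, _⟩ := exists_orth_decomp (Fin.tail v) (v 0)
    have hv : v = Fin.cons (b + p) (Fin.tail v) := by rw [← hx, Fin.cons_self_tail]
    rw [hv, gramDet_cons _ _ _ hb hp]
    exact mul_nonneg (sq_nonneg _) (ih _)

lemma gramDet_pos [FiniteDimensional ℝ F] :
    ∀ {m : ℕ} (v : Fin m → F), LinearIndependent ℝ v → 0 < gramDet v := by
  intro m
  induction m with
  | zero => intro v _; simp [gramDet, Matrix.det_fin_zero]
  | succ m ih =>
    intro v hv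
    obtain ⟨b, p, hx, _, hb, hp, _⟩ := exists_orth_decomp (Fin.tail v) (v 0)
    have hveq : v = Fin.cons (b + p) (Fin.tail v) := by rw [← hx, Fin.cons_self_tail]
    have htail : LinearIndependent ℝ (Fin.tail v) ∧ v 0 ∉ span ℝ (range (Fin.tail v)) := by
      rw [← linearIndependent_fin_cons, Fin.cons_self_tail]
      exact hv
    have hbne : b ≠ 0 := by
      rintro rfl
      exact htail.2 (by rw [hx, zero_add]; exact hp)
    rw [hveq, gramDet_cons _ _ _ hb hp]
    have hbpos : 0 < ‖b‖ := norm_pos_iff.mpr hbne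
    exact mul_pos (by positivity) (ih _ htail.1)

set_option synthInstance.maxHeartbeats 1000000 in
lemma abs_inner_eq_of_rank_one {K : Submodule ℝ F} (hK : Module.finrank ℝ K = 1)
    {x y : F} (hx : x ∈ K) (hy : y ∈ K) : |⟪x, y⟫_ℝ| = ‖x‖ * ‖y‖ := by
  obtain ⟨v, hv0, hv⟩ := finrank_eq_one_iff'.mp hK
  obtain ⟨c, hc⟩ := hv ⟨x, hx⟩
  obtain ⟨c', hc'⟩ := hv ⟨y, hy⟩
  have hx' : x = c • (v : F) := by
    rw [← Submodule.coe_smul] at *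
    exact (congrArg Subtype.val hc).symm
  have hy' : y = c' • (v : F) := by
    rw [← Submodule.coe_smul] at *
    exact (congrArg Subtype.val hc').symm
  rw [hx', hy', real_inner_smul_left, real_inner_smul_right,
    real_inner_self_eq_norm_sq, norm_smul, norm_smul]
  simp [abs_mul, sq, Real.norm_eq_abs]
  ring

lemma gramDet_eq_sq_det {m : ℕ} (v : Fin m → EuclideanSpace ℝ (Fin m)) :
    gramDet v = (Matrix.of fun i j => v i j).det ^ 2 := by
  have h : (Matrix.of fun i j : Fin m => ⟪v i, v j⟫_ℝ)
      = (Matrix.of fun i j => v i j) * (Matrix.of fun i j => v i j)ᵀ := by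
    funext i j
    simp [Matrix.mul_apply, PiLp.inner_apply, Matrix.transpose_apply, mul_comm]
  rw [gramDet, h, Matrix.det_mul, Matrix.det_transpose, sq]


-- ============ specific helpers ============


lemma mem_orthogonal_span_range {m : ℕ} {v : Fin m → F} {x : F}
    (h : ∀ i, ⟪v i, x⟫_ℝ = 0) : x ∈ (span ℝ (range v))ᗮ := by
  rw [Submodule.mem_orthogonal]
  intro u hu
  refine Submodule.span_induction (p := fun u _ => ⟪u, x⟫_ℝ = 0) ?_ ?_ ?_ ?_ hu
  · rintro u ⟨i, rfl⟩; exact h i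
  · simp
  · intro a b _ _ ha hb; rw [inner_add_left, ha, hb, add_zero]
  · intro r a _ ha; rw [real_inner_smul_left, ha, mul_zero]

lemma prE_castSucc {m : ℕ} (x : E (m + 2)) (i : Fin (m + 1)) :
    pr (m + 2) x i = x i.castSucc := rfl

def prL (m : ℕ) : E (m + 2) →ₗ[ℝ] E (m + 1) where
  toFun := pr (m + 2)
  map_add' _ _ := rfl
  map_smul' _ _ := rfl

lemma inner_split {m : ℕ} (x y : E (m + 2)) :
    ⟪x, y⟫_ℝ = ⟪pr (m + 2) x, pr (m + 2) y⟫_ℝ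
      + x (Fin.last (m + 1)) * y (Fin.last (m + 1)) := by
  have h1 : ⟪x, y⟫_ℝ = ∑ i : Fin (m + 2), x i * y i := by
    simp [PiLp.inner_apply, RCLike.inner_apply, mul_comm]
  rw [h1, Fin.sum_univ_castSucc]
  congr 1
  rw [PiLp.inner_apply]
  exact Finset.sum_congr rfl fun i _ => by rw [real_inner_comm]; rfl


set_option maxHeartbeats 2000000 in
theorem stmt15 (d : ℕ) (hd : 3 ≤ d) (z : ℕ → Fin d → ℤ)
    (hbasis : IsZBasis d (fun j => z (j.1 + 1)))
    (hlip1 : LinearIndependent ℝ (fun i : Fin (d - 1) => pr d (toE d (z (i.1 + 1)))))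
    (hlip2 : LinearIndependent ℝ (fun i : Fin (d - 1) => pr d (toE d (z (i.1 + 2)))))
    (h31 : ‖pr d (toE d (z 1))‖ ≤ ‖pr d (toE d (z 3))‖)
    (hdet : 3 * ‖pr d (toE d (z 2))‖ * detL d z 2 (d - 2) < detL d z 2 (d - 1))
    (α1 : E d) (hα1pi : α1 ⟨d - 1, by omega⟩ = 1)
    (hα1perp : ∀ i : Fin (d - 1), ⟪α1, toE d (z (i.1 + 1))⟫_ℝ = 0)
    (α2 : E d) (hα2pi : α2 ⟨d - 1, by omega⟩ = 1)
    (hα2perp : ∀ i : Fin (d - 1), ⟪α2, toE d (z (i.1 + 2))⟫_ℝ = 0) :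
    (∀ x : E d, x ⟨d - 1, by omega⟩ = 1 → ‖x - α2‖ ≤ Rq d z 2 → ‖x - α1‖ < Rq d z 1) ∧
      Rq d z 2 < Rq d z 1 / 3 := by
  obtain ⟨m, rfl⟩ : ∃ m, d = m + 2 := ⟨d - 2, by omega⟩
  have hm : 1 ≤ m := by omega
  set a : ℕ → E (m + 1) := fun k => pr (m + 2) (toE (m + 2) (z k)) with ha
  set g : Fin m → E (m + 1) := fun i => a (2 + i.1) with hg
  set f1 : Fin (m + 1) → E (m + 1) := fun i => a (1 + i.1) with hf1
  set f2 : Fin (m + 1) → E (m + 1) := fun i => a (2 + i.1) with hf2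
  -- linear independence
  have hli1 : LinearIndependent ℝ f1 := by
    have h : f1 = fun i : Fin (m + 1) => a (i.1 + 1) := by
      funext i; rw [hf1]; simp [Nat.add_comm]
    rw [h]; exact hlip1
  have hli2 : LinearIndependent ℝ f2 := by
    have h : f2 = fun i : Fin (m + 1) => a (i.1 + 2) := by
      funext i; rw [hf2]; simp [Nat.add_comm]
    rw [h]; exact hlip2
  have hlig : LinearIndependent ℝ g := by
    have h : g = f2 ∘ Fin.castSucc := by
      funext i; rw [hg, hf2]; rfl
    rw [h]; exact hli2.comp _ (Fin.castSucc_injective _)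
  -- quantities
  have hPpos : 0 < Real.sqrt (gramDet f1) := Real.sqrt_pos.mpr (gramDet_pos f1 hli1)
  have hQpos : 0 < Real.sqrt (gramDet f2) := Real.sqrt_pos.mpr (gramDet_pos f2 hli2)
  have hSnn : 0 ≤ Real.sqrt (gramDet g) := Real.sqrt_nonneg _
  have hdetLP : detL (m + 2) z 1 (m + 1) = Real.sqrt (gramDet f1) := rfl
  have hdetLQ : detL (m + 2) z 2 (m + 1) = Real.sqrt (gramDet f2) := rfl
  have hdetLS : detL (m + 2) z 2 m = Real.sqrt (gramDet g) := rfl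
  -- norms
  have ha1 : 0 < ‖a 1‖ := by
    have h := hli1.ne_zero ⟨0, Nat.succ_pos m⟩
    rw [hf1] at h
    simpa using norm_pos_iff.mpr h
  have ha2 : 0 < ‖a 2‖ := by
    have h := hli2.ne_zero ⟨0, Nat.succ_pos m⟩
    rw [hf2] at h
    simpa using norm_pos_iff.mpr h
  have ha3 : 0 < ‖a 3‖ := by
    have h := hli2.ne_zero ⟨1, by omega⟩
    rw [hf2] at h
    simpa using norm_pos_iff.mpr h
  -- orthogonal decomposition of a 1 against g
  obtain ⟨b, p, hdecomp, hbK, hbg, hpK, hble⟩ := exists_orth_decomp g (a 1)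
  have hcons : f1 = Fin.cons (b + p) g := by
    funext i
    rcases i.eq_zero_or_eq_succ with rfl | ⟨i', rfl⟩
    · rw [hf1]; simpa using hdecomp
    · rw [Fin.cons_succ]
      show a (1 + (i'.1 + 1)) = a (2 + i'.1)
      rw [show 1 + (i'.1 + 1) = 2 + i'.1 from by omega]
  have hPfact : Real.sqrt (gramDet f1) = ‖b‖ * Real.sqrt (gramDet g) := by
    rw [hcons, gramDet_cons g b p hbg hpK, Real.sqrt_mul (sq_nonneg _),
      Real.sqrt_sq (norm_nonneg b)]
  have hSpos : 0 < Real.sqrt (gramDet g) := Real.sqrt_pos.mpr (gramDet_pos g hlig)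
  have hbpos : 0 < ‖b‖ := by
    by_contra h
    push_neg at h
    have : ‖b‖ = 0 := le_antisymm h (norm_nonneg b)
    rw [hPfact, this, zero_mul] at hPpos
    exact lt_irrefl _ hPpos
  -- finrank of K = span g
  have hfrKo : Module.finrank ℝ ((span ℝ (range g))ᗮ) = 1 := by
    have h1 : Module.finrank ℝ (span ℝ (range g)) = m := by
      rw [finrank_span_eq_card hlig]; simp
    have h2 := (span ℝ (range g)).finrank_add_finrank_orthogonal
    have h3 : Module.finrank ℝ (E (m + 1)) = m + 1 := by
      simp [finrank_euclideanSpace]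
    omega
  -- the vector w = α1 - α2
  set w : E (m + 2) := α1 - α2 with hwdef
  set wp : E (m + 1) := pr (m + 2) w with hwp
  have hwlast : w (Fin.last (m + 1)) = 0 := by
    have h1 : α1 (Fin.last (m + 1)) = 1 := hα1pi
    have h2 : α2 (Fin.last (m + 1)) = 1 := hα2pi
    rw [hwdef]
    show α1 (Fin.last (m + 1)) - α2 (Fin.last (m + 1)) = 0
    rw [h1, h2, sub_self]
  have hwnorm : ‖w‖ = ‖wp‖ := by
    have h := inner_split w w
    rw [hwlast, zero_mul, add_zero] at h
    have h2 : ‖w‖ ^ 2 = ‖wp‖ ^ 2 := by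
      rw [← real_inner_self_eq_norm_sq, ← real_inner_self_eq_norm_sq, h]
    calc ‖w‖ = Real.sqrt (‖w‖ ^ 2) := (Real.sqrt_sq (norm_nonneg _)).symm
    _ = Real.sqrt (‖wp‖ ^ 2) := by rw [h2]
    _ = ‖wp‖ := Real.sqrt_sq (norm_nonneg _)
  have hsplit : ∀ k, ⟪w, toE (m + 2) (z k)⟫_ℝ = ⟪wp, a k⟫_ℝ := by
    intro k
    rw [inner_split, hwlast, zero_mul, add_zero]
  have hworth : ∀ i : Fin m, ⟪wp, g i⟫_ℝ = 0 := by
    intro i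
    have e1 : ⟪α1, toE (m + 2) (z (2 + i.1))⟫_ℝ = 0 := by
      have h := hα1perp ⟨i.1 + 1, by omega⟩
      rw [show 2 + i.1 = (i.1 + 1) + 1 from by omega]
      exact h
    have e2 : ⟪α2, toE (m + 2) (z (2 + i.1))⟫_ℝ = 0 := by
      have h := hα2perp ⟨i.1, by omega⟩
      rw [show 2 + i.1 = i.1 + 2 from by omega]
      exact h
    have h3 : ⟪w, toE (m + 2) (z (2 + i.1))⟫_ℝ = 0 := by
      rw [hwdef, inner_sub_left, e1, e2, sub_zero]
    rw [hsplit (2 + i.1)] at h3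
    exact h3
  have hwpK : wp ∈ (span ℝ (range g))ᗮ := by
    apply mem_orthogonal_span_range
    intro i
    rw [real_inner_comm]; exact hworth i
  have hCS : |⟪wp, b⟫_ℝ| = ‖wp‖ * ‖b‖ := abs_inner_eq_of_rank_one hfrKo hwpK hbK
  have hwpp : ⟪wp, p⟫_ℝ = 0 := by
    rw [real_inner_comm]
    exact (Submodule.mem_orthogonal _ wp).mp hwpK p hpK
  have hwa1 : ⟪wp, a 1⟫_ℝ = ⟪wp, b⟫_ℝ := by
    rw [hdecomp, inner_add_right, hwpp, add_zero]
  have hwz1 : ⟪wp, a 1⟫_ℝ = -⟪α2, toE (m + 2) (z 1)⟫_ℝ := by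
    rw [← hsplit 1, hwdef, inner_sub_left]
    have h := hα1perp ⟨0, Nat.succ_pos m⟩
    rw [show (0 : ℕ) + 1 = 1 from rfl] at h
    rw [h, zero_sub]
  -- key identity : ‖w‖ * P = |⟪α2,z1⟫| * S
  have hkey1 : ‖w‖ * Real.sqrt (gramDet f1)
      = |⟪α2, toE (m + 2) (z 1)⟫_ℝ| * Real.sqrt (gramDet g) := by
    rw [hwnorm, hPfact, ← mul_assoc, ← hCS, ← hwa1, hwz1, abs_neg]
  -- ====== determinant identity ======
  have hkey2 : |⟪α2, toE (m + 2) (z 1)⟫_ℝ| * Real.sqrt (gramDet f2) = 1 := by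
    classical
    set T : Matrix (Fin (m + 2)) (Fin (m + 2)) ℝ :=
      Matrix.of (fun i j : Fin (m + 2) => (z (i.1 + 1) j : ℝ)) with hT
    have hTdet : |T.det| = 1 := by
      have h1 : IsUnit (Matrix.of (fun i j : Fin (m + 2) => z (j.1 + 1) i)).det := hbasis
      have h2 : (Matrix.of (fun i j : Fin (m + 2) => z (j.1 + 1) i))
          = (Matrix.of (fun i j : Fin (m + 2) => z (i.1 + 1) j))ᵀ := rfl
      rw [h2, Matrix.det_transpose] at h1
      have h3 : T = (Int.castRingHom ℝ).mapMatrix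
          (Matrix.of (fun i j : Fin (m + 2) => z (i.1 + 1) j)) := rfl
      have h4 := RingHom.map_det (Int.castRingHom ℝ)
        (Matrix.of (fun i j : Fin (m + 2) => z (i.1 + 1) j))
      rw [h3, ← h4]
      rcases Int.isUnit_iff.mp h1 with h | h <;> rw [h] <;> norm_num
    set L : (Fin (m + 2) → ℝ) →ₗ[ℝ] ℝ :=
      { toFun := fun x => (T.updateRow 0 x).det
        map_add' := fun u v => Matrix.det_updateRow_add T 0 u v
        map_smul' := fun s u => Matrix.det_updateRow_smul T 0 s u } with hL
    have hLrow : ∀ r : Fin (m + 2), r ≠ 0 → L (T r) = 0 := by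
      intro r hr
      show (T.updateRow 0 (T r)).det = 0
      apply Matrix.det_zero_of_row_eq (show (0 : Fin (m + 2)) ≠ r from fun hh => hr hh.symm)
      rw [Matrix.updateRow_self, Matrix.updateRow_ne hr]
    have hLz : ∀ j : Fin (m + 1), L (toE (m + 2) (z (j.1 + 2))) = 0 := by
      intro j
      have hrow : (toE (m + 2) (z (j.1 + 2)) : Fin (m + 2) → ℝ)
          = T (Fin.succ ⟨j.1, by omega⟩) := by
        funext k
        show (z (j.1 + 2) k : ℝ) = (z (j.1 + 1 + 1) k : ℝ)
        rw [show j.1 + 2 = j.1 + 1 + 1 from by omega]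
      rw [hrow]
      exact hLrow _ (Fin.succ_ne_zero _)
    set c : E (m + 2) := WithLp.toLp 2 (fun k => L (Pi.single k 1)) with hcdef
    have hLinner : ∀ x : E (m + 2), L x = ⟪x, c⟫_ℝ := by
      intro x
      have hx : (x : Fin (m + 2) → ℝ)
          = ∑ k, x k • (Pi.single k 1 : Fin (m + 2) → ℝ) := by
        funext j
        rw [Finset.sum_apply]
        simp [Pi.single_apply]
      calc L x = L (∑ k, x k • (Pi.single k 1 : Fin (m + 2) → ℝ)) := by rw [← hx]
      _ = ∑ k, x k • L (Pi.single k 1 : Fin (m + 2) → ℝ) := by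
          rw [map_sum]
          exact Finset.sum_congr rfl fun k _ => L.map_smul (x k) _
      _ = ⟪x, c⟫_ℝ := by
          rw [PiLp.inner_apply]
          simp [hcdef, smul_eq_mul, mul_comm]
    have hcU : ∀ j : Fin (m + 1), ⟪toE (m + 2) (z (j.1 + 2)), c⟫_ℝ = 0 := fun j => by
      rw [← hLinner]; exact hLz j
    have hcUo : c ∈ (span ℝ (range (fun j : Fin (m + 1) => toE (m + 2) (z (j.1 + 2)))))ᗮ :=
      mem_orthogonal_span_range hcU
    have hα2Uo : α2 ∈ (span ℝ (range (fun j : Fin (m + 1) => toE (m + 2) (z (j.1 + 2)))))ᗮ := by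
      apply mem_orthogonal_span_range
      intro i
      rw [real_inner_comm]; exact hα2perp i
    have hfrUo : Module.finrank ℝ
        ((span ℝ (range (fun j : Fin (m + 1) => toE (m + 2) (z (j.1 + 2)))))ᗮ) = 1 := by
      have hliU : LinearIndependent ℝ (fun j : Fin (m + 1) => toE (m + 2) (z (j.1 + 2))) :=
        LinearIndependent.of_comp (prL m) hlip2
      have h1 : Module.finrank ℝ
          (span ℝ (range (fun j : Fin (m + 1) => toE (m + 2) (z (j.1 + 2))))) = m + 1 := by
        rw [finrank_span_eq_card hliU]; simp
      have h2 := (span ℝ (range (fun j : Fin (m + 1) =>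
        toE (m + 2) (z (j.1 + 2))))).finrank_add_finrank_orthogonal
      have h3 : Module.finrank ℝ (E (m + 2)) = m + 2 := by simp [finrank_euclideanSpace]
      omega
    have hα2ne : α2 ≠ 0 := by
      intro h
      rw [h] at hα2pi
      exact one_ne_zero hα2pi.symm
    obtain ⟨t, hct⟩ : ∃ t : ℝ, c = t • α2 := by
      obtain ⟨v, hv0, hv⟩ := finrank_eq_one_iff'.mp hfrUo
      obtain ⟨s, hs⟩ := hv ⟨α2, hα2Uo⟩
      obtain ⟨u, hu⟩ := hv ⟨c, hcUo⟩
      have hs' : α2 = s • (v : E (m + 2)) := (congrArg Subtype.val hs).symm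
      have hu' : c = u • (v : E (m + 2)) := (congrArg Subtype.val hu).symm
      have hsne : s ≠ 0 := by
        intro h; rw [h, zero_smul] at hs'; exact hα2ne hs'
      refine ⟨u / s, ?_⟩
      rw [hu', hs', smul_smul]
      congr 1; field_simp
    have htc : t = c (Fin.last (m + 1)) := by
      have h2 : α2 (Fin.last (m + 1)) = 1 := hα2pi
      rw [hct]
      show t = t * α2 (Fin.last (m + 1))
      rw [h2, mul_one]
    set N : Matrix (Fin (m + 1)) (Fin (m + 1)) ℝ := Matrix.of (fun i j => f2 i j) with hNd
    have hsub : (T.updateRow 0 (Pi.single (Fin.last (m + 1)) 1)).submatrix Fin.succ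
        ((Fin.last (m + 1)).succAbove) = N := by
      funext i j
      rw [Matrix.submatrix_apply, Fin.succAbove_last, Matrix.updateRow_ne (Fin.succ_ne_zero i)]
      show (z (i.1 + 1 + 1) (Fin.castSucc j) : ℝ) = f2 i j
      rw [hf2]
      show (z (i.1 + 1 + 1) (Fin.castSucc j) : ℝ)
        = (z (2 + i.1) (Fin.castLE (Nat.sub_le (m + 2) 1) j) : ℝ)
      rw [show i.1 + 1 + 1 = 2 + i.1 from by omega]
      rfl
    have hclast : |c (Fin.last (m + 1))| = |N.det| := by
      have h1 : c (Fin.last (m + 1))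
          = (T.updateRow 0 (Pi.single (Fin.last (m + 1)) 1)).det := rfl
      rw [h1, Matrix.det_succ_row_zero, Finset.sum_eq_single (Fin.last (m + 1))
        (fun j _ hj => by simp [Matrix.updateRow_self, Pi.single_eq_of_ne hj])
        (by simp)]
      have h2 : (T.updateRow 0 (Pi.single (Fin.last (m + 1)) 1)) 0 (Fin.last (m + 1)) = 1 := by
        simp
      rw [h2, hsub, mul_one, abs_mul]
      simp [abs_pow]
    have hTinner : T.det = ⟪toE (m + 2) (z 1), c⟫_ℝ := by
      rw [← hLinner]
      show T.det = (T.updateRow 0 (toE (m + 2) (z 1))).det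
      have h0 : (toE (m + 2) (z 1) : Fin (m + 2) → ℝ) = T 0 := rfl
      rw [h0, Matrix.updateRow_eq_self]
    have hQN : Real.sqrt (gramDet f2) = |N.det| := by
      rw [show gramDet f2 = N.det ^ 2 from gramDet_eq_sq_det f2, Real.sqrt_sq_eq_abs]
    have h6 : (1 : ℝ) = |⟪α2, toE (m + 2) (z 1)⟫_ℝ| * |N.det| := by
      rw [← hTdet, hTinner, hct, real_inner_smul_right, abs_mul, htc, hclast,
        real_inner_comm, mul_comm]
    rw [hQN, ← h6]
  -- ====== conclusion ======
  have hRq1 : Rq (m + 2) z 1 = 1 / (2 * ‖a 2‖ * Real.sqrt (gramDet f1)) := rfl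
  have hRq2 : Rq (m + 2) z 2 = 1 / (2 * ‖a 3‖ * Real.sqrt (gramDet f2)) := rfl
  have hdet' : 3 * ‖a 2‖ * Real.sqrt (gramDet g) < Real.sqrt (gramDet f2) := hdet
  have h31' : ‖a 1‖ ≤ ‖a 3‖ := h31
  -- part 2 : R2 < R1 / 3
  have hpart2 : Rq (m + 2) z 2 < Rq (m + 2) z 1 / 3 := by
    rw [hRq1, hRq2, div_div]
    have hA : (0:ℝ) < 2 * ‖a 3‖ * Real.sqrt (gramDet f2) := by positivity
    have hB : (0:ℝ) < 2 * ‖a 2‖ * Real.sqrt (gramDet f1) * 3 := by positivity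
    rw [div_lt_div_iff₀ hA hB, hPfact]
    have t1 : ‖b‖ * Real.sqrt (gramDet g) ≤ ‖a 1‖ * Real.sqrt (gramDet g) :=
      mul_le_mul_of_nonneg_right hble hSnn
    have e1 : ‖a 1‖ * (3 * ‖a 2‖ * Real.sqrt (gramDet g)) < ‖a 1‖ * Real.sqrt (gramDet f2) :=
      mul_lt_mul_of_pos_left hdet' ha1
    have e2 : ‖a 1‖ * Real.sqrt (gramDet f2) ≤ ‖a 3‖ * Real.sqrt (gramDet f2) :=
      mul_le_mul_of_nonneg_right h31' hQpos.le
    nlinarith [mul_le_mul_of_nonneg_left t1 (mul_nonneg (by norm_num : (0:ℝ) ≤ 6) ha2.le)]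
  refine ⟨?_, hpart2⟩
  -- part 1
  intro x hx hxR
  have hwbound : ‖w‖ < 2 / 3 * Rq (m + 2) z 1 := by
    rw [hRq1]
    have hβpos : 0 < |⟪α2, toE (m + 2) (z 1)⟫_ℝ| := by
      rcases (abs_nonneg ⟪α2, toE (m + 2) (z 1)⟫_ℝ).lt_or_eq with h | h
      · exact h
      · rw [← h, zero_mul] at hkey2
        exact absurd hkey2 (by norm_num)
    have hstep : ‖w‖ * Real.sqrt (gramDet f1) * (3 * ‖a 2‖) < 1 := by
      have h4 := mul_lt_mul_of_pos_left hdet' hβpos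
      calc ‖w‖ * Real.sqrt (gramDet f1) * (3 * ‖a 2‖)
          = |⟪α2, toE (m + 2) (z 1)⟫_ℝ| * Real.sqrt (gramDet g) * (3 * ‖a 2‖) := by
            rw [hkey1]
      _ = |⟪α2, toE (m + 2) (z 1)⟫_ℝ| * (3 * ‖a 2‖ * Real.sqrt (gramDet g)) := by ring
      _ < |⟪α2, toE (m + 2) (z 1)⟫_ℝ| * Real.sqrt (gramDet f2) := h4
      _ = 1 := hkey2
    rw [show (2:ℝ) / 3 * (1 / (2 * ‖a 2‖ * Real.sqrt (gramDet f1)))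
        = 1 / (3 * ‖a 2‖ * Real.sqrt (gramDet f1)) from by
      field_simp]
    rw [lt_div_iff₀ (by positivity)]
    nlinarith [hstep]
  have htri : ‖x - α1‖ ≤ ‖x - α2‖ + ‖w‖ := by
    have h : x - α1 = (x - α2) + (α2 - α1) := by abel
    rw [h]
    calc ‖(x - α2) + (α2 - α1)‖ ≤ ‖x - α2‖ + ‖α2 - α1‖ := norm_add_le _ _
    _ = ‖x - α2‖ + ‖w‖ := by rw [hwdef, norm_sub_rev α2 α1]
  have := hpart2
  calc ‖x - α1‖ ≤ ‖x - α2‖ + ‖w‖ := htri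
  _ < Rq (m + 2) z 1 / 3 + 2 / 3 * Rq (m + 2) z 1 := by
      have := hxR.trans_lt hpart2
      linarith [hwbound]
  _ = Rq (m + 2) z 1 := by ring
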